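/- If e^{iλ} ∈ σ(U) for λ ∈ [0,2π), then λ is a root of the equation det((∏_{i=0}^{n_+−1} T_i^+(λ) − ζ_+^<(λ)·I)·T_+(λ)) = 0. -/

import Mathlib

open scoped Real

/-- The coin matrix `C = e^{iΔ}[[α, β], [−conj β, conj α]]`. -/
noncomputable def coinM (a b : ℂ) (d : ℝ) : Matrix (Fin 2) (Fin 2) ℂ :=
  Complex.exp (Complex.I * d) • !![a, b; -(starRingEnd ℂ b), starRingEnd ℂ a]

/-- The transfer matrix `T(λ) = (1/α)[[e^{i(λ−Δ)}, −β], [−conj β, e^{−i(λ−Δ)}]]`. -/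
noncomputable def transferM (a b : ℂ) (d l : ℝ) : Matrix (Fin 2) (Fin 2) ℂ :=
  a⁻¹ • !![Complex.exp (Complex.I * (l - d)), -b;
           -(starRingEnd ℂ b), Complex.exp (-(Complex.I * (l - d)))]

/-- Square-summability of `Ψ : ℤ → ℂ²`, i.e. `Σ_{x∈ℤ} ‖Ψ(x)‖²_{ℂ²} < ∞`. -/
def SqSummable (Ψ : ℤ → Fin 2 → ℂ) : Prop :=
  Summable fun x : ℤ => ‖Ψ x 0‖ ^ 2 + ‖Ψ x 1‖ ^ 2

/-- The time evolution `U = SC`:  `(UΨ)(x) = ((C_{x+1}Ψ(x+1))_L, (C_{x−1}Ψ(x−1))_R)ᵀ`. -/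
noncomputable def Uact (C : ℤ → Matrix (Fin 2) (Fin 2) ℂ) (Ψ : ℤ → Fin 2 → ℂ) :
    ℤ → Fin 2 → ℂ :=
  fun x => ![(C (x + 1)).mulVec (Ψ (x + 1)) 0, (C (x - 1)).mulVec (Ψ (x - 1)) 1]

/-- The inverse of the unitary `J`:  `(J⁻¹Ψ)(x) = (Ψ_L(x+1), Ψ_R(x))ᵀ`. -/
def JinvAct (Ψ : ℤ → Fin 2 → ℂ) : ℤ → Fin 2 → ℂ := fun x => ![Ψ (x + 1) 0, Ψ x 1]

/-- Ordered product `∏_{i=0}^{n-1} T_i = T_{n-1} ⋯ T_1 T_0`. -/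
noncomputable def prodRev (T : ℕ → Matrix (Fin 2) (Fin 2) ℂ) : ℕ → Matrix (Fin 2) (Fin 2) ℂ
  | 0 => 1
  | n + 1 => T n * prodRev T n

/-- `T_{n−1} T_{n−2} ⋯ T_1 T_0` for matrices indexed by `ℤ`. -/
noncomputable def prodZpos (T : ℤ → Matrix (Fin 2) (Fin 2) ℂ) :
    ℕ → Matrix (Fin 2) (Fin 2) ℂ
  | 0 => 1
  | n + 1 => T n * prodZpos T n

/-- `T_{−n}⁻¹ T_{−n+1}⁻¹ ⋯ T_{−2}⁻¹ T_{−1}⁻¹` for matrices indexed by `ℤ`. -/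
noncomputable def prodZneg (T : ℤ → Matrix (Fin 2) (Fin 2) ℂ) :
    ℕ → Matrix (Fin 2) (Fin 2) ℂ
  | 0 => 1
  | n + 1 => (T (-(n + 1 : ℕ)))⁻¹ * prodZneg T n

/-- `A = (1/2)·α_0⋯α_{n−1}·tr(∏_{i=0}^{n−1} T_i)` (a real number, taken via its real part). -/
noncomputable def Adef (αs : ℕ → ℂ) (Ts : ℕ → Matrix (Fin 2) (Fin 2) ℂ) (n : ℕ) : ℝ :=
  ((1 / 2 : ℂ) * (∏ i ∈ Finset.range n, αs i) * (prodRev Ts n).trace).re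

/-- `ζ^< = (A − sgn(A)·√(A² − |α_0|²⋯|α_{n−1}|²))/(α_0⋯α_{n−1})`. -/
noncomputable def zetaLT (αs : ℕ → ℂ) (Ts : ℕ → Matrix (Fin 2) (Fin 2) ℂ) (n : ℕ) : ℂ :=
  ((Adef αs Ts n : ℂ) -
      ((Real.sign (Adef αs Ts n) *
        Real.sqrt ((Adef αs Ts n) ^ 2 - ∏ i ∈ Finset.range n, ‖αs i‖ ^ 2) : ℝ) : ℂ)) /
    ∏ i ∈ Finset.range n, αs i

/-- `ζ^> = (A + sgn(A)·√(A² − |α_0|²⋯|α_{n−1}|²))/(α_0⋯α_{n−1})`. -/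
noncomputable def zetaGT (αs : ℕ → ℂ) (Ts : ℕ → Matrix (Fin 2) (Fin 2) ℂ) (n : ℕ) : ℂ :=
  ((Adef αs Ts n : ℂ) +
      ((Real.sign (Adef αs Ts n) *
        Real.sqrt ((Adef αs Ts n) ^ 2 - ∏ i ∈ Finset.range n, ‖αs i‖ ^ 2) : ℝ) : ℂ)) /
    ∏ i ∈ Finset.range n, αs i


section Helpers

open Matrix Complex Filter

theorem conj_mul_self' (a : ℂ) : starRingEnd ℂ a * a = ((‖a‖ ^ 2 : ℝ) : ℂ) := by
  rw [mul_comm, Complex.mul_conj']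
  push_cast
  simp [Complex.sq_norm, Complex.normSq_eq_norm_sq]

theorem unit_eq' (a b : ℂ) (hab : ‖a‖ ^ 2 + ‖b‖ ^ 2 = 1) :
    starRingEnd ℂ a * a + starRingEnd ℂ b * b = 1 := by
  rw [conj_mul_self', conj_mul_self', ← Complex.ofReal_add, hab, Complex.ofReal_one]

theorem transfer_det' (a b : ℂ) (d l : ℝ) (ha : a ≠ 0) (hab : ‖a‖ ^ 2 + ‖b‖ ^ 2 = 1) :
    (transferM a b d l).det = starRingEnd ℂ a / a := by
  have hu := unit_eq' a b hab
  rw [transferM, Matrix.det_smul]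
  simp only [Matrix.det_fin_two_of, Fintype.card_fin]
  rw [← Complex.exp_add]
  ring_nf
  rw [Complex.exp_zero]
  field_simp
  linear_combination (-1 : ℂ) * hu

def Jmat : Matrix (Fin 2) (Fin 2) ℂ := !![0, 1; 1, 0]

theorem Jmat_mul_Jmat : Jmat * Jmat = 1 := by
  ext i j
  fin_cases i <;> fin_cases j <;>
    simp [Jmat, Matrix.mul_apply, Fin.sum_univ_two, Matrix.one_apply]

theorem J_conj_fac (b : ℂ) (d l : ℝ) :
    (!![Complex.exp (Complex.I * (l - d)), -b;
       -(starRingEnd ℂ b), Complex.exp (-(Complex.I * (l - d)))]).map (starRingEnd ℂ)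
      = Jmat * !![Complex.exp (Complex.I * (l - d)), -b;
       -(starRingEnd ℂ b), Complex.exp (-(Complex.I * (l - d)))] * Jmat := by
  have hc : starRingEnd ℂ (Complex.exp (Complex.I * ((l : ℂ) - (d : ℂ))))
      = Complex.exp (-(Complex.I * ((l : ℂ) - (d : ℂ)))) := by
    rw [← Complex.exp_conj]
    congr 1
    simp [Complex.conj_I]
  have hc2 : starRingEnd ℂ (Complex.exp (-(Complex.I * ((l : ℂ) - (d : ℂ)))))
      = Complex.exp (Complex.I * ((l : ℂ) - (d : ℂ))) := by
    rw [← Complex.exp_conj]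
    congr 1
    simp [Complex.conj_I]
  ext i j
  fin_cases i <;> fin_cases j <;>
    simp [Jmat, Matrix.mul_apply, Fin.sum_univ_two, hc, hc2]

theorem J_conj_prod (T : ℕ → Matrix (Fin 2) (Fin 2) ℂ) (n : ℕ)
    (h : ∀ k < n, (T k).map (starRingEnd ℂ) = Jmat * T k * Jmat) :
    (prodRev T n).map (starRingEnd ℂ) = Jmat * prodRev T n * Jmat := by
  induction n with
  | zero =>
      show (1 : Matrix (Fin 2) (Fin 2) ℂ).map _ = Jmat * (1 : Matrix (Fin 2) (Fin 2) ℂ) * Jmat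
      rw [Matrix.map_one _ (map_zero _) (map_one _), mul_one, Jmat_mul_Jmat]
  | succ n ih =>
      have hn := h n (Nat.lt_succ_self n)
      have ih' := ih fun k hk => h k (hk.trans (Nat.lt_succ_self n))
      show (T n * prodRev T n).map _ = _
      rw [Matrix.map_mul, hn, ih']
      show _ = Jmat * (T n * prodRev T n) * Jmat
      have : Jmat * T n * Jmat * (Jmat * prodRev T n * Jmat)
          = Jmat * T n * (Jmat * Jmat) * prodRev T n * Jmat := by
        noncomm_ring
      rw [this, Jmat_mul_Jmat, mul_one]
      noncomm_ring

theorem trace_J_conj (N : Matrix (Fin 2) (Fin 2) ℂ)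
    (h : N.map (starRingEnd ℂ) = Jmat * N * Jmat) :
    starRingEnd ℂ N.trace = N.trace := by
  have h1 : (N.map (starRingEnd ℂ)).trace = starRingEnd ℂ N.trace := by
    simp [Matrix.trace_fin_two, Matrix.map_apply]
  rw [← h1, h, Matrix.trace_mul_cycle, Jmat_mul_Jmat, one_mul]

theorem prodRev_smul (c : ℕ → ℂ) (T : ℕ → Matrix (Fin 2) (Fin 2) ℂ) (n : ℕ) :
    prodRev (fun k => c k • T k) n = (∏ k ∈ Finset.range n, c k) • prodRev T n := by
  induction n with
  | zero => simp [prodRev]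
  | succ n ih =>
      show (c n • T n) * prodRev (fun k => c k • T k) n = _
      rw [ih, Finset.prod_range_succ, smul_mul_smul_comm, mul_comm (c n)]
      rfl

theorem prodRev_det (T : ℕ → Matrix (Fin 2) (Fin 2) ℂ) (n : ℕ) :
    (prodRev T n).det = ∏ k ∈ Finset.range n, (T k).det := by
  induction n with
  | zero => simp [prodRev]
  | succ n ih =>
      show (T n * prodRev T n).det = _
      rw [Matrix.det_mul, ih, Finset.prod_range_succ, mul_comm]

theorem two_by_two_CH (M : Matrix (Fin 2) (Fin 2) ℂ) :
    M * M = M.trace • M - M.det • 1 := by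
  ext i j
  fin_cases i <;> fin_cases j <;>
    simp [Matrix.mul_apply, Matrix.trace_fin_two, Matrix.det_fin_two, Fin.sum_univ_two,
      Matrix.one_apply] <;> ring

theorem det_sub_smul_one (M : Matrix (Fin 2) (Fin 2) ℂ) (z : ℂ) :
    (M - z • 1).det = z ^ 2 - M.trace * z + M.det := by
  simp [Matrix.det_fin_two, Matrix.trace_fin_two, Matrix.one_apply]
  ring

theorem no_decay (P : Matrix (Fin 2) (Fin 2) ℂ) (z₁ z₂ : ℂ)
    (htr : P.trace = z₁ + z₂) (hdet : P.det = z₁ * z₂)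
    (hne : z₁ ≠ z₂) (h1 : ‖z₁‖ = 1) (h2 : ‖z₂‖ = 1)
    (w : Fin 2 → ℂ)
    (hw : Tendsto (fun m => (P ^ m).mulVec w) atTop (nhds 0)) : w = 0 := by
  have hz₁ : z₁ ≠ 0 := by intro h; rw [h] at h1; simp at h1
  have hz₂ : z₂ ≠ 0 := by intro h; rw [h] at h2; simp at h2
  set v₁ : Fin 2 → ℂ := P.mulVec w - z₂ • w with hv₁
  set v₂ : Fin 2 → ℂ := P.mulVec w - z₁ • w with hv₂
  have hCH : P.mulVec (P.mulVec w) = (z₁ + z₂) • P.mulVec w - (z₁ * z₂) • w := by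
    rw [Matrix.mulVec_mulVec, two_by_two_CH, htr, hdet]
    rw [Matrix.sub_mulVec, Matrix.smul_mulVec, Matrix.smul_mulVec,
      Matrix.one_mulVec]
  have hPv₁ : P.mulVec v₁ = z₁ • v₁ := by
    rw [hv₁, Matrix.mulVec_sub, Matrix.mulVec_smul, hCH]
    module
  have hPv₂ : P.mulVec v₂ = z₂ • v₂ := by
    rw [hv₂, Matrix.mulVec_sub, Matrix.mulVec_smul, hCH]
    module
  have hpow₁ : ∀ m : ℕ, (P ^ m).mulVec v₁ = z₁ ^ m • v₁ := by
    intro m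
    induction m with
    | zero => simp [Matrix.one_mulVec]
    | succ m ih =>
        rw [pow_succ', ← Matrix.mulVec_mulVec, ih, Matrix.mulVec_smul, hPv₁,
          smul_smul, pow_succ, mul_comm]
  have hpow₂ : ∀ m : ℕ, (P ^ m).mulVec v₂ = z₂ ^ m • v₂ := by
    intro m
    induction m with
    | zero => simp [Matrix.one_mulVec]
    | succ m ih =>
        rw [pow_succ', ← Matrix.mulVec_mulVec, ih, Matrix.mulVec_smul, hPv₂,
          smul_smul, pow_succ, mul_comm]
  have hvw : ∀ m : ℕ, z₁ ^ m • v₁ - z₂ ^ m • v₂ = (z₁ - z₂) • (P ^ m).mulVec w := by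
    intro m
    rw [← hpow₁, ← hpow₂, hv₁, hv₂, Matrix.mulVec_sub, Matrix.mulVec_smul,
      Matrix.mulVec_sub, Matrix.mulVec_smul]
    module
  have hlim : Tendsto (fun m => z₁ ^ m • v₁ - z₂ ^ m • v₂) atTop (nhds 0) := by
    simp only [hvw]
    have := hw.const_smul (z₁ - z₂)
    simpa using this
  set r : ℂ := z₂ / z₁ with hr
  have hrnorm : ‖r‖ = 1 := by rw [hr, norm_div, h1, h2, div_one]
  have hrne : r ≠ 1 := by
    rw [hr]; intro h; apply hne; field_simp at h; rw [h]
  have hulim : Tendsto (fun m => v₁ - r ^ m • v₂) atTop (nhds 0) := by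
    rw [tendsto_zero_iff_norm_tendsto_zero]
    rw [tendsto_zero_iff_norm_tendsto_zero] at hlim
    have heq : ∀ m : ℕ, ‖v₁ - r ^ m • v₂‖ = ‖z₁ ^ m • v₁ - z₂ ^ m • v₂‖ := by
      intro m
      have : z₁ ^ m • (v₁ - r ^ m • v₂) = z₁ ^ m • v₁ - z₂ ^ m • v₂ := by
        rw [smul_sub, smul_smul, hr, div_pow]
        congr 2
        field_simp
      rw [← this, norm_smul, norm_pow, h1, one_pow, one_mul]
    simp only [heq]
    exact hlim
  have hrv : Tendsto (fun m => r ^ m • v₂) atTop (nhds v₁) := by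
    have := hulim.const_sub v₁
    simpa using this
  have hrv' : Tendsto (fun m => r ^ (m + 1) • v₂) atTop (nhds v₁) :=
    hrv.comp (tendsto_add_atTop_nat 1)
  have hrv'' : Tendsto (fun m => r ^ (m + 1) • v₂) atTop (nhds (r • v₁)) := by
    have : (fun m => r ^ (m + 1) • v₂) = fun m => r • (r ^ m • v₂) := by
      funext m; rw [pow_succ, mul_comm, mul_smul]
    rw [this]
    exact hrv.const_smul r
  have hrv₁ : r • v₁ = v₁ := tendsto_nhds_unique hrv'' hrv'
  have hv₁0 : v₁ = 0 := by
    have : (r - 1) • v₁ = 0 := by rw [sub_smul, one_smul, hrv₁, sub_self]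
    rcases smul_eq_zero.mp this with h | h
    · exact absurd (sub_eq_zero.mp h) hrne
    · exact h
  have hv₂0 : v₂ = 0 := by
    have h0 : Tendsto (fun m => r ^ m • v₂) atTop (nhds 0) := by rw [← hv₁0]; exact hrv
    have hc : Tendsto (fun _ : ℕ => ‖v₂‖) atTop (nhds 0) := by
      have := h0.norm
      simpa [norm_smul, norm_pow, hrnorm] using this
    have : ‖v₂‖ = 0 := tendsto_nhds_unique tendsto_const_nhds hc
    exact norm_eq_zero.mp this
  have hzw : (z₁ - z₂) • w = 0 := by
    have := hvw 0
    simp [hv₁0, hv₂0] at this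
    simpa using this.symm
  rcases smul_eq_zero.mp hzw with h | h
  · exact absurd (sub_eq_zero.mp h) hne
  · exact h

theorem scalar_step (a b D E p0 p1 q0 q1 : ℂ) (ha : a ≠ 0) (hD : D ≠ 0) (hE : E ≠ 0)
    (hu : starRingEnd ℂ a * a + starRingEnd ℂ b * b = 1)
    (h1 : D * (a * q0 + b * p1) = E * p0)
    (h2 : D * (-(starRingEnd ℂ b) * q0 + starRingEnd ℂ a * p1) = E * q1) :
    q0 = a⁻¹ * (E / D * p0 + -b * p1) ∧
    q1 = a⁻¹ * (-(starRingEnd ℂ b) * p0 + D / E * p1) := by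
  have key : a * (E * q1) = -(starRingEnd ℂ b) * (E * p0) + D * p1 := by
    linear_combination (-a) * h2 + (-(starRingEnd ℂ b)) * h1 + D * p1 * hu
  constructor
  · field_simp
    linear_combination h1
  · field_simp
    linear_combination key

theorem coin_mulVec (a b : ℂ) (d : ℝ) (v : Fin 2 → ℂ) :
    (coinM a b d).mulVec v 0 = Complex.exp (Complex.I * d) * (a * v 0 + b * v 1) ∧
    (coinM a b d).mulVec v 1
      = Complex.exp (Complex.I * d) * (-(starRingEnd ℂ b) * v 0 + starRingEnd ℂ a * v 1) := by
  constructor <;>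
  · simp [coinM, Matrix.mulVec, dotProduct, Fin.sum_univ_two]
    ring

theorem mulVec_transfer (a b : ℂ) (d l : ℝ) (ha : a ≠ 0) (hab : ‖a‖ ^ 2 + ‖b‖ ^ 2 = 1)
    (p0 p1 q0 q1 : ℂ)
    (h1 : Complex.exp (Complex.I * d) * (a * q0 + b * p1) = Complex.exp (Complex.I * l) * p0)
    (h2 : Complex.exp (Complex.I * d) * (-(starRingEnd ℂ b) * q0 + starRingEnd ℂ a * p1)
      = Complex.exp (Complex.I * l) * q1) :
    (transferM a b d l).mulVec ![p0, p1] = ![q0, q1] := by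
  have hD : Complex.exp (Complex.I * d) ≠ 0 := Complex.exp_ne_zero _
  have hE : Complex.exp (Complex.I * l) ≠ 0 := Complex.exp_ne_zero _
  have hu := unit_eq' a b hab
  obtain ⟨hq0, hq1⟩ := scalar_step a b (Complex.exp (Complex.I * d))
    (Complex.exp (Complex.I * l)) p0 p1 q0 q1 ha hD hE hu h1 h2
  have hdiv : Complex.exp (Complex.I * ((l : ℂ) - (d : ℂ)))
      = Complex.exp (Complex.I * l) / Complex.exp (Complex.I * d) := by
    rw [mul_sub, Complex.exp_sub]
  have hdiv2 : Complex.exp (-(Complex.I * ((l : ℂ) - (d : ℂ))))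
      = Complex.exp (Complex.I * d) / Complex.exp (Complex.I * l) := by
    rw [mul_sub, neg_sub, sub_eq_add_neg, Complex.exp_add, Complex.exp_neg]
    field_simp
  funext i
  fin_cases i <;>
    simp [transferM, Matrix.mulVec, dotProduct, Fin.sum_univ_two, hdiv, hdiv2,
      hq0, hq1] <;> ring

end Helpers

set_option maxHeartbeats 2000000 in
/-- If `e^{iλ} ∈ σ(U)`, then `λ` is a root of the equation
`det((∏_{i=0}^{n_+−1} T_i^+(λ) − ζ_+^<(λ)·I)·T_+(λ)) = 0`. -/
theorem det_eq_zero_of_eigenvalue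
    (α β : ℤ → ℂ) (Δ : ℤ → ℝ)
    (hα : ∀ x, α x ≠ 0)
    (hαβ : ∀ x, ‖α x‖ ^ 2 + ‖β x‖ ^ 2 = 1)
    (hΔ : ∀ x, 0 ≤ Δ x ∧ Δ x < 2 * π)
    (xp xm : ℤ) (hxp : 0 ≤ xp) (hxm : xm ≤ 0)
    (np nm : ℕ) (hnp : 0 < np) (hnm : 0 < nm)
    (αp βp : ℕ → ℂ) (Δp : ℕ → ℝ) (αm βm : ℕ → ℂ) (Δm : ℕ → ℝ)
    (hαp : ∀ k < np, αp k ≠ 0)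
    (hαβp : ∀ k < np, ‖αp k‖ ^ 2 + ‖βp k‖ ^ 2 = 1)
    (hΔp : ∀ k < np, 0 ≤ Δp k ∧ Δp k < 2 * π)
    (hαm : ∀ k < nm, αm k ≠ 0)
    (hαβm : ∀ k < nm, ‖αm k‖ ^ 2 + ‖βm k‖ ^ 2 = 1)
    (hΔm : ∀ k < nm, 0 ≤ Δm k ∧ Δm k < 2 * π)
    (hper_p : ∀ x : ℤ, xp ≤ x →
      α x = αp ((x - xp) % (np : ℤ)).toNat ∧ β x = βp ((x - xp) % (np : ℤ)).toNat ∧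
        Δ x = Δp ((x - xp) % (np : ℤ)).toNat)
    (hper_m : ∀ x : ℤ, x < xm →
      α x = αm ((x - xm) % (nm : ℤ)).toNat ∧ β x = βm ((x - xm) % (nm : ℤ)).toNat ∧
        Δ x = Δm ((x - xm) % (nm : ℤ)).toNat)
    (l : ℝ) (hl : 0 ≤ l ∧ l < 2 * π)
    (hσ : ∃ Ψ : ℤ → Fin 2 → ℂ, SqSummable Ψ ∧ Ψ ≠ 0 ∧
        Uact (fun x => coinM (α x) (β x) (Δ x)) Ψ = Complex.exp (Complex.I * l) • Ψ) :
    ((prodRev (fun k => transferM (αp k) (βp k) (Δp k) l) np -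
          zetaLT αp (fun k => transferM (αp k) (βp k) (Δp k) l) np • 1) *
        prodZpos (fun x => transferM (α x) (β x) (Δ x) l) xp.toNat).det = 0 := by
  classical
  obtain ⟨Ψ, hsumm, hΨne, heig⟩ := hσ
  set Tp : ℕ → Matrix (Fin 2) (Fin 2) ℂ := fun k => transferM (αp k) (βp k) (Δp k) l
    with hTpdef
  rw [Matrix.det_mul]
  apply mul_eq_zero_of_left
  rw [det_sub_smul_one, zetaLT]
  set P : Matrix (Fin 2) (Fin 2) ℂ := prodRev Tp np with hPdef
  set aprod : ℂ := ∏ i ∈ Finset.range np, αp i with haproddef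
  set A : ℝ := Adef αp Tp np with hAdef
  set pR : ℝ := ∏ i ∈ Finset.range np, ‖αp i‖ ^ 2 with hpRdef
  have haprod_ne : aprod ≠ 0 := by
    rw [haproddef]
    exact Finset.prod_ne_zero_iff.mpr fun i hi => hαp i (Finset.mem_range.mp hi)
  have hpRpos : 0 < pR := by
    rw [hpRdef]
    exact Finset.prod_pos fun i hi =>
      pow_pos (norm_pos_iff.mpr (hαp i (Finset.mem_range.mp hi))) 2
  -- the factorization of each α • T as the unimodular matrix
  have hfold : ∀ k < np, αp k • Tp k =
      !![Complex.exp (Complex.I * ((l : ℂ) - (Δp k : ℂ))), -(βp k);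
         -(starRingEnd ℂ (βp k)), Complex.exp (-(Complex.I * ((l : ℂ) - (Δp k : ℂ))))] := by
    intro k hk
    show αp k • transferM (αp k) (βp k) (Δp k) l = _
    rw [transferM, smul_smul, mul_inv_cancel₀ (hαp k hk), one_smul]
  -- reality of aprod * trace P
  have hconjN : starRingEnd ℂ (aprod * P.trace) = aprod * P.trace := by
    have hN : prodRev (fun k => αp k • Tp k) np = aprod • P := by
      rw [hPdef, haproddef]; exact prodRev_smul _ _ _
    have hJ : (prodRev (fun k => αp k • Tp k) np).map (starRingEnd ℂ)
        = Jmat * prodRev (fun k => αp k • Tp k) np * Jmat := by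
      apply J_conj_prod
      intro k hk
      show (αp k • Tp k).map (starRingEnd ℂ) = Jmat * (αp k • Tp k) * Jmat
      rw [hfold k hk]
      exact J_conj_fac (βp k) (Δp k) l
    have h2 := trace_J_conj _ hJ
    rwa [hN, Matrix.trace_smul, smul_eq_mul] at h2
  have hAc : ((A : ℝ) : ℂ) = (1 / 2 : ℂ) * (aprod * P.trace) := by
    have h2 : starRingEnd ℂ ((1 / 2 : ℂ) * (aprod * P.trace))
        = (1 / 2 : ℂ) * (aprod * P.trace) := by
      rw [map_mul, hconjN, map_div₀, map_one, map_ofNat]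
    have h3 := Complex.conj_eq_iff_re.mp h2
    have h4 : A = ((1 / 2 : ℂ) * (aprod * P.trace)).re := by
      rw [hAdef, Adef, hPdef, haproddef, mul_assoc]
    rw [h4, h3]
  have htrP : P.trace = 2 * ((A : ℝ) : ℂ) / aprod := by
    rw [hAc]
    field_simp
  have hdet1 : P.det = ∏ k ∈ Finset.range np, (starRingEnd ℂ (αp k) / αp k) := by
    rw [hPdef, prodRev_det]
    exact Finset.prod_congr rfl fun k hk =>
      transfer_det' _ _ _ _ (hαp k (Finset.mem_range.mp hk)) (hαβp k (Finset.mem_range.mp hk))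
  have hdetP : P.det * aprod ^ 2 = ((pR : ℝ) : ℂ) := by
    rw [hdet1, haproddef, hpRdef, Complex.ofReal_prod, pow_two,
      ← Finset.prod_mul_distrib, ← Finset.prod_mul_distrib]
    refine Finset.prod_congr rfl fun k hk => ?_
    have hk' := hαp k (Finset.mem_range.mp hk)
    have h5 : starRingEnd ℂ (αp k) / αp k * (αp k * αp k) = starRingEnd ℂ (αp k) * αp k := by
      field_simp
    rw [h5, conj_mul_self']
  have hdet' : P.det = ((pR : ℝ) : ℂ) / aprod ^ 2 := by
    rw [eq_div_iff (pow_ne_zero 2 haprod_ne)]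
    exact hdetP
  by_cases hcase : pR ≤ A ^ 2
  · -- hyperbolic / parabolic case: ζ is a root of the characteristic polynomial
    have hAne : A ≠ 0 := by
      intro h
      rw [h] at hcase
      simp at hcase
      nlinarith
    have hsgn : Real.sign A ^ 2 = 1 := by
      rcases lt_or_gt_of_ne hAne with h | h
      · rw [Real.sign_of_neg h]; norm_num
      · rw [Real.sign_of_pos h]; norm_num
    have hsqrt : Real.sqrt (A ^ 2 - pR) ^ 2 = A ^ 2 - pR :=
      Real.sq_sqrt (by linarith)
    rw [htrP, hdet']
    have hS1 : ((Real.sign A : ℝ) : ℂ) ^ 2 = 1 := by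
      rw [← Complex.ofReal_pow, hsgn, Complex.ofReal_one]
    have hS2 : ((Real.sqrt (A ^ 2 - pR) : ℝ) : ℂ) ^ 2 = ((A : ℝ) : ℂ) ^ 2 - ((pR : ℝ) : ℂ) := by
      rw [← Complex.ofReal_pow, hsqrt]
      push_cast
      ring
    field_simp
    push_cast
    ring_nf
    linear_combination (((Real.sqrt (A ^ 2 - pR) : ℝ) : ℂ) ^ 2) * hS1 +
      hS2
  · -- elliptic case: contradiction with the existence of an ℓ² eigenvector
    exfalso
    push_neg at hcase
    -- the transfer matrix recursion for φ
    set φ : ℤ → Fin 2 → ℂ := fun x => ![Ψ (x - 1) 0, Ψ x 1] with hφdef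
    have heig' : ∀ (x : ℤ) (i : Fin 2),
        Uact (fun x => coinM (α x) (β x) (Δ x)) Ψ x i = Complex.exp (Complex.I * l) * Ψ x i := by
      intro x i
      rw [heig]
      simp
    have eq1 : ∀ x : ℤ, Complex.exp (Complex.I * (Δ x)) * (α x * Ψ x 0 + β x * Ψ x 1)
        = Complex.exp (Complex.I * l) * Ψ (x - 1) 0 := by
      intro x
      have h := heig' (x - 1) 0
      rw [Uact] at h
      simp only [Matrix.cons_val_zero, sub_add_cancel] at h
      rw [(coin_mulVec (α x) (β x) (Δ x) (Ψ x)).1] at h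
      exact h
    have eq2 : ∀ x : ℤ, Complex.exp (Complex.I * (Δ x)) *
          (-(starRingEnd ℂ (β x)) * Ψ x 0 + starRingEnd ℂ (α x) * Ψ x 1)
        = Complex.exp (Complex.I * l) * Ψ (x + 1) 1 := by
      intro x
      have h := heig' (x + 1) 1
      rw [Uact] at h
      simp only [Matrix.cons_val_one, Matrix.head_cons, add_sub_cancel_right] at h
      rw [(coin_mulVec (α x) (β x) (Δ x) (Ψ x)).2] at h
      exact h
    have hstep : ∀ x : ℤ, φ (x + 1) = (transferM (α x) (β x) (Δ x) l).mulVec (φ x) := by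
      intro x
      have h := mulVec_transfer (α x) (β x) (Δ x) l (hα x) (hαβ x)
        (Ψ (x - 1) 0) (Ψ x 1) (Ψ x 0) (Ψ (x + 1) 1) (eq1 x) (eq2 x)
      rw [hφdef]
      simp only [add_sub_cancel_right]
      exact h.symm
    -- backwards propagation of vanishing
    have hback : ∀ x : ℤ, φ (x + 1) = 0 → φ x = 0 := by
      intro x h0
      have hdet : IsUnit (transferM (α x) (β x) (Δ x) l).det := by
        rw [transfer_det' _ _ _ _ (hα x) (hαβ x)]
        exact isUnit_iff_ne_zero.mpr
          (div_ne_zero (star_ne_zero.mpr (hα x)) (hα x))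
      have h1 := hstep x
      rw [h0] at h1
      have h2 : ((transferM (α x) (β x) (Δ x) l)⁻¹).mulVec
          ((transferM (α x) (β x) (Δ x) l).mulVec (φ x)) = φ x := by
        rw [Matrix.mulVec_mulVec, Matrix.nonsing_inv_mul _ hdet, Matrix.one_mulVec]
      rw [← h1] at h2
      rw [← h2]
      simp [Matrix.mulVec_zero]
    -- φ never vanishes
    have hφne : ∀ x : ℤ, φ x ≠ 0 := by
      intro x0 h0
      have hfor : ∀ n : ℕ, φ (x0 + n) = 0 ∧ φ (x0 - n) = 0 := by
        intro n
        induction n with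
        | zero => exact ⟨by simpa using h0, by simpa using h0⟩
        | succ n ih =>
            constructor
            · have : φ (x0 + n + 1) = 0 := by
                rw [hstep (x0 + n), ih.1, Matrix.mulVec_zero]
              have he : (x0 : ℤ) + (n + 1 : ℕ) = x0 + n + 1 := by push_cast; ring
              rw [he]
              exact this
            · have he : (x0 : ℤ) - (n + 1 : ℕ) + 1 = x0 - n := by push_cast; ring
              apply hback
              rw [he]
              exact ih.2
      have hall : ∀ x : ℤ, φ x = 0 := by
        intro x
        rcases le_or_gt x0 x with h | h
        · have := (hfor (x - x0).toNat).1
          rwa [Int.toNat_of_nonneg (by linarith), add_sub_cancel] at this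
        · have := (hfor (x0 - x).toNat).2
          rwa [Int.toNat_of_nonneg (by linarith), sub_sub_cancel] at this
      apply hΨne
      funext x i
      fin_cases i
      · have := congrFun (hall (x + 1)) 0
        simpa [hφdef] using this
      · have := congrFun (hall x) 1
        simpa [hφdef] using this
    -- periodicity
    have hperT : ∀ j : ℕ, transferM (α (xp + j)) (β (xp + j)) (Δ (xp + j)) l = Tp (j % np) := by
      intro j
      obtain ⟨h1, h2, h3⟩ := hper_p (xp + j) (le_add_of_nonneg_right (Int.natCast_nonneg j))
      have hmod : ((xp + (j : ℤ) - xp) % (np : ℤ)).toNat = j % np := by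
        rw [add_sub_cancel_left]
        rw [← Int.natCast_mod, Int.toNat_natCast]
      rw [h1, h2, h3, hmod]
    have hstepψ : ∀ j : ℕ, φ (xp + j + 1) = (Tp (j % np)).mulVec (φ (xp + j)) := by
      intro j
      rw [← hperT j]
      exact hstep (xp + j)
    -- iterating over one period
    have hchunk : ∀ m : ℕ, ∀ k : ℕ, k ≤ np →
        φ (xp + (np * m + k : ℕ)) = (prodRev Tp k).mulVec (φ (xp + (np * m : ℕ))) := by
      intro m k
      induction k with
      | zero => intro _; simp [prodRev, Matrix.one_mulVec]
      | succ k ih =>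
          intro hk
          have hk' : k < np := hk
          have hmod : (np * m + k) % np = k := by
            rw [Nat.mul_add_mod]
            exact Nat.mod_eq_of_lt hk'
          have he : (xp : ℤ) + (np * m + (k + 1) : ℕ) = xp + (np * m + k : ℕ) + 1 := by
            push_cast; ring
          rw [he]
          rw [hstepψ (np * m + k), hmod, ih (le_of_lt hk')]
          rw [Matrix.mulVec_mulVec]
          rfl
    set w : Fin 2 → ℂ := φ xp with hwdef
    have hiter : ∀ m : ℕ, φ (xp + (np * m : ℕ)) = (P ^ m).mulVec w := by
      intro m
      induction m with
      | zero => simp [Matrix.one_mulVec, hwdef]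
      | succ m ih =>
          have h1 : np * (m + 1) = np * m + np := by ring
          rw [h1, hchunk m np le_rfl, ih, Matrix.mulVec_mulVec, ← hPdef, ← pow_succ']
    -- decay of Ψ along injective sequences
    have hdecay : ∀ g : ℕ → ℤ, Function.Injective g → ∀ i : Fin 2,
        Filter.Tendsto (fun m => Ψ (g m) i) Filter.atTop (nhds 0) := by
      intro g hg i
      have hcof : Filter.Tendsto (fun x : ℤ => ‖Ψ x 0‖ ^ 2 + ‖Ψ x 1‖ ^ 2)
          Filter.cofinite (nhds 0) := hsumm.tendsto_cofinite_zero
      have hgc : Filter.Tendsto g Filter.atTop Filter.cofinite := by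
        rw [← Nat.cofinite_eq_atTop]
        exact hg.tendsto_cofinite
      have htg : Filter.Tendsto (fun m => ‖Ψ (g m) 0‖ ^ 2 + ‖Ψ (g m) 1‖ ^ 2)
          Filter.atTop (nhds 0) := hcof.comp hgc
      have hbound : ∀ (x : ℤ), ‖Ψ x i‖ ^ 2 ≤ ‖Ψ x 0‖ ^ 2 + ‖Ψ x 1‖ ^ 2 := by
        intro x
        have h0 := sq_nonneg ‖Ψ x 0‖
        have h1 := sq_nonneg ‖Ψ x 1‖
        fin_cases i
        · exact le_add_of_nonneg_right h1
        · exact le_add_of_nonneg_left h0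
      have hsq : Filter.Tendsto (fun m => ‖Ψ (g m) i‖ ^ 2) Filter.atTop (nhds 0) := by
        apply squeeze_zero (fun m => sq_nonneg _) (fun m => hbound (g m)) htg
      rw [tendsto_zero_iff_norm_tendsto_zero]
      have : Filter.Tendsto (fun m => Real.sqrt (‖Ψ (g m) i‖ ^ 2)) Filter.atTop (nhds 0) := by
        have h0 : Real.sqrt 0 = 0 := Real.sqrt_zero
        rw [← h0]
        exact (Real.continuous_sqrt.tendsto 0).comp hsq
      simpa [Real.sqrt_sq (norm_nonneg _)] using this
    -- the orbit tends to zero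
    have htend : Filter.Tendsto (fun m => (P ^ m).mulVec w) Filter.atTop (nhds 0) := by
      rw [tendsto_pi_nhds]
      intro i
      have hrw : ∀ m : ℕ, (P ^ m).mulVec w i = φ (xp + (np * m : ℕ)) i := by
        intro m; rw [hiter m]
      simp only [hrw]
      fin_cases i
      · have hg : Function.Injective (fun m : ℕ => (xp + (np * m : ℕ)) - 1) := by
          intro m m' h
          simp only at h
          have : (np : ℤ) * m = (np : ℤ) * m' := by push_cast at h; linarith
          have := mul_left_cancel₀ (by exact_mod_cast hnp.ne' : (np : ℤ) ≠ 0) this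
          exact_mod_cast this
        have := hdecay _ hg 0
        simpa [hφdef] using this
      · have hg : Function.Injective (fun m : ℕ => xp + (np * m : ℕ)) := by
          intro m m' h
          simp only at h
          have : (np : ℤ) * m = (np : ℤ) * m' := by push_cast at h; linarith
          have := mul_left_cancel₀ (by exact_mod_cast hnp.ne' : (np : ℤ) ≠ 0) this
          exact_mod_cast this
        have := hdecay _ hg 1
        simpa [hφdef] using this
    -- eigenvalues on the unit circle
    set q : ℝ := Real.sqrt (pR - A ^ 2) with hqdef
    have hq2 : q ^ 2 = pR - A ^ 2 := Real.sq_sqrt (by linarith)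
    have hqpos : 0 < q := Real.sqrt_pos.mpr (by linarith)
    set z₁ : ℂ := (((A : ℝ) : ℂ) + (q : ℂ) * Complex.I) / aprod with hz₁def
    set z₂ : ℂ := (((A : ℝ) : ℂ) - (q : ℂ) * Complex.I) / aprod with hz₂def
    have htr2 : P.trace = z₁ + z₂ := by
      rw [htrP, hz₁def, hz₂def]
      field_simp
      ring
    have hq2C : ((q : ℝ) : ℂ) ^ 2 = ((pR : ℝ) : ℂ) - ((A : ℝ) : ℂ) ^ 2 := by
      rw [← Complex.ofReal_pow, hq2]
      push_cast
      ring
    have hdet2 : P.det = z₁ * z₂ := by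
      rw [hdet', hz₁def, hz₂def, div_mul_div_comm,
        show aprod * aprod = aprod ^ 2 from (pow_two aprod).symm]
      congr 1
      have hI : Complex.I ^ 2 = -1 := Complex.I_sq
      linear_combination (-1 : ℂ) * hq2C + ((q : ℝ) : ℂ) ^ 2 * hI
    have hzne : z₁ ≠ z₂ := by
      rw [hz₁def, hz₂def]
      intro h
      rw [div_eq_div_iff haprod_ne haprod_ne] at h
      have h2 : (q : ℂ) * Complex.I = 0 := by
        have := mul_right_cancel₀ haprod_ne h
        linear_combination this / 2
      rcases mul_eq_zero.mp h2 with h3 | h3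
      · rw [Complex.ofReal_eq_zero] at h3
        linarith
      · exact Complex.I_ne_zero h3
    have hnorm_aprod : ‖aprod‖ ^ 2 = pR := by
      rw [haproddef, hpRdef]
      rw [norm_prod, ← Finset.prod_pow]
    have hnum1 : ‖(((A : ℝ) : ℂ) + (q : ℂ) * Complex.I)‖ ^ 2 = A ^ 2 + q ^ 2 := by
      rw [Complex.sq_norm, Complex.normSq_apply]
      simp
      ring
    have hnum2 : ‖(((A : ℝ) : ℂ) - (q : ℂ) * Complex.I)‖ ^ 2 = A ^ 2 + q ^ 2 := by
      rw [Complex.sq_norm, Complex.normSq_apply]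
      simp
      ring
    have hsumR : A ^ 2 + q ^ 2 = pR := by rw [hq2]; ring
    have hn₁ : ‖z₁‖ = 1 := by
      have h1 : ‖z₁‖ ^ 2 = 1 := by
        rw [hz₁def, norm_div, div_pow, hnorm_aprod, hnum1, hsumR,
          div_self (ne_of_gt hpRpos)]
      nlinarith [norm_nonneg z₁]
    have hn₂ : ‖z₂‖ = 1 := by
      have h1 : ‖z₂‖ ^ 2 = 1 := by
        rw [hz₂def, norm_div, div_pow, hnorm_aprod, hnum2, hsumR,
          div_self (ne_of_gt hpRpos)]
      nlinarith [norm_nonneg z₂]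
    have hw0 : w = 0 := no_decay P z₁ z₂ htr2 hdet2 hzne hn₁ hn₂ w htend
    exact hφne xp hw0
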